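/- Let K, Q ∈ ℝ^{T×d} with T ≥ d and R < d, and assume the singular value gap σ_R(K) > σ_{R+1}(K). For each β > 0 let C_β ∈ ℝ^{2T×d} be the vertical stacking of βK on top of β^{-1}Q, and let V_β ∈ ℝ^{d×R} be any matrix whose columns are the first R right singular vectors of C_β (i.e., the first R columns of V in some SVD C_β = U Σ Vᵀ). Let V̂_K ∈ ℝ^{d×R} consist of the first R right singular vectors of K. Then lim_{β→∞} ‖K V_β V_βᵀ Qᵀ − K Qᵀ‖_F = ‖K V̂_K V̂_Kᵀ Qᵀ − K Qᵀ‖_F. (Equivalently, as the ratio α = ‖β^{-1}Q‖_F / ‖βK‖_F → 0, the error of the Eigen method, which projects onto the top R right singular vectors of the stacked query–key matrix, converges to the error of K-SVD.) -/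

import Mathlib

set_option maxHeartbeats 1600000

open Matrix Finset Polynomial

/-- The Frobenius norm of a real matrix. -/
noncomputable def frobNorm {α β : Type*} [Fintype α] [Fintype β]
    (M : Matrix α β ℝ) : ℝ :=
  Real.sqrt (∑ i, ∑ j, (M i j) ^ 2)

structure IsSVD {α β : Type*} [Fintype α] [Fintype β] {r : ℕ}
    (M : Matrix α β ℝ) (U : Matrix α (Fin r) ℝ) (σ : ℕ → ℝ)
    (V : Matrix β (Fin r) ℝ) : Prop where
  factorization : M = U * Matrix.diagonal (fun i : Fin r => σ ((i : ℕ) + 1)) * Vᵀ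
  leftOrtho : Uᵀ * U = 1
  rightOrtho : Vᵀ * V = 1
  antitone : ∀ i j : ℕ, 1 ≤ i → i ≤ j → σ j ≤ σ i
  nonneg : ∀ i : ℕ, 1 ≤ i → 0 ≤ σ i
  padZero : ∀ i : ℕ, r < i → σ i = 0

/-- The submatrix made of the first `R` columns of a matrix. -/
def firstCols {α : Type*} {q : ℕ} (M : Matrix α (Fin q) ℝ) {R : ℕ} (h : R ≤ q) :
    Matrix α (Fin R) ℝ :=
  M.submatrix id (Fin.castLE h)

section Aux



lemma det_conj_diag {d : ℕ} (V : Matrix (Fin d) (Fin d) ℝ) (f : Fin d → ℝ)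
    (hV : Vᵀ * V = 1) (x : ℝ) :
    (x • (1 : Matrix (Fin d) (Fin d) ℝ) - V * Matrix.diagonal f * Vᵀ).det
      = ∏ i, (x - f i) := by
  have hV' : V * Vᵀ = 1 := mul_eq_one_comm.mp hV
  have h1 : x • (1 : Matrix (Fin d) (Fin d) ℝ) - V * Matrix.diagonal f * Vᵀ
      = V * (Matrix.diagonal fun i => x - f i) * Vᵀ := by
    have : (Matrix.diagonal fun i : Fin d => x - f i)
        = x • (1 : Matrix (Fin d) (Fin d) ℝ) - Matrix.diagonal f := by
      rw [Matrix.smul_one_eq_diagonal, Matrix.diagonal_sub]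
    rw [this, mul_sub, sub_mul]
    congr 1
    rw [Matrix.mul_smul, Matrix.mul_one, Matrix.smul_mul, hV']
  rw [h1, Matrix.det_mul, Matrix.det_mul, Matrix.det_transpose, Matrix.det_diagonal]
  have h2 : V.det * V.det = 1 := by
    have := congrArg Matrix.det hV'
    rwa [Matrix.det_mul, Matrix.det_transpose, Matrix.det_one] at this
  rw [show V.det * (∏ i, (x - f i)) * V.det = V.det * V.det * ∏ i, (x - f i) by ring, h2,
    one_mul]

lemma eig_unique {d : ℕ} (V W : Matrix (Fin d) (Fin d) ℝ) (f g : Fin d → ℝ)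
    (hV : Vᵀ * V = 1) (hW : Wᵀ * W = 1)
    (hf : ∀ i j : Fin d, i ≤ j → f j ≤ f i) (hg : ∀ i j : Fin d, i ≤ j → g j ≤ g i)
    (heq : V * Matrix.diagonal f * Vᵀ = W * Matrix.diagonal g * Wᵀ) : f = g := by
  have hdet : ∀ x : ℝ, ∏ i, (x - f i) = ∏ i, (x - g i) := by
    intro x
    rw [← det_conj_diag V f hV x, ← det_conj_diag W g hW x, heq]
  -- polynomials
  have hpoly : ((Finset.univ.val.map f).map fun a => (X : ℝ[X]) - C a).prod
      = ((Finset.univ.val.map g).map fun a => (X : ℝ[X]) - C a).prod := by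
    apply Polynomial.funext
    intro x
    rw [eval_multiset_prod, eval_multiset_prod, Multiset.map_map, Multiset.map_map,
      Multiset.map_map, Multiset.map_map]
    simp only [Function.comp_def, eval_sub, eval_X, eval_C]
    have := hdet x
    rwa [← Finset.prod_map_val, ← Finset.prod_map_val] at this
  have hms : Finset.univ.val.map f = Finset.univ.val.map g := by
    have := congrArg Polynomial.roots hpoly
    rwa [Polynomial.roots_multiset_prod_X_sub_C, Polynomial.roots_multiset_prod_X_sub_C] at this
  rw [Fin.univ_val_map, Fin.univ_val_map] at hms
  have hperm : (List.ofFn f).Perm (List.ofFn g) := Multiset.coe_eq_coe.mp hms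
  have hsf : (List.ofFn f).Pairwise (fun a b => b ≤ a) :=
    List.pairwise_ofFn.mpr fun i j hij => hf i j hij.le
  have hsg : (List.ofFn g).Pairwise (fun a b => b ≤ a) :=
    List.pairwise_ofFn.mpr fun i j hij => hg i j hij.le
  have : List.ofFn f = List.ofFn g := by
    refine hperm.eq_of_pairwise (fun a b _ _ h1 h2 => le_antisymm h2 h1) hsf hsg
  exact List.ofFn_injective this



lemma firstCols_mul_transpose {d R : ℕ} (h : R ≤ d) (V : Matrix (Fin d) (Fin d) ℝ) :
    firstCols V h * (firstCols V h)ᵀ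
      = V * Matrix.diagonal (fun j : Fin d => if (j : ℕ) < R then (1:ℝ) else 0) * Vᵀ := by
  ext i i'
  rw [Matrix.mul_apply, Matrix.mul_apply]
  simp only [Matrix.mul_diagonal, Matrix.transpose_apply, firstCols, Matrix.submatrix_apply,
    id_eq]
  have : ∀ j : Fin d, V i j * (if (j : ℕ) < R then (1:ℝ) else 0) * V i' j
      = if (j : ℕ) < R then V i j * V i' j else 0 := by
    intro j; by_cases hj : (j : ℕ) < R <;> simp [hj]
  rw [Finset.sum_congr rfl fun j _ => this j, ← Finset.sum_filter]
  refine Finset.sum_bij (fun (k : Fin R) _ => Fin.castLE h k) ?_ ?_ ?_ ?_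
  · intro k _; simp [Fin.isLt k]
  · intro a _ b _ hab
    exact Fin.castLE_injective h hab
  · intro j hj
    simp only [Finset.mem_filter] at hj
    exact ⟨⟨(j : ℕ), hj.2⟩, Finset.mem_univ _, rfl⟩
  · intro k _; rfl

lemma proj_unique {d R : ℕ} (h : R ≤ d) (V W : Matrix (Fin d) (Fin d) ℝ) (f : Fin d → ℝ)
    (hV : Vᵀ * V = 1) (hW : Wᵀ * W = 1)
    (hgap : ∀ j k : Fin d, (j : ℕ) < R → R ≤ (k : ℕ) → f k < f j)
    (heq : V * Matrix.diagonal f * Vᵀ = W * Matrix.diagonal f * Wᵀ) :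
    firstCols V h * (firstCols V h)ᵀ = firstCols W h * (firstCols W h)ᵀ := by
  have hV' : V * Vᵀ = 1 := mul_eq_one_comm.mp hV
  have hW' : W * Wᵀ = 1 := mul_eq_one_comm.mp hW
  set C := Vᵀ * W with hC
  have hCo : Cᵀ * C = 1 := by
    rw [hC, Matrix.transpose_mul, Matrix.transpose_transpose, Matrix.mul_assoc,
      ← Matrix.mul_assoc V, hV', Matrix.one_mul, hW]
  have hCC : C * Cᵀ = 1 := mul_eq_one_comm.mp hCo
  have hComm : Matrix.diagonal f * C = C * Matrix.diagonal f := by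
    have h1 : Vᵀ * (V * Matrix.diagonal f * Vᵀ) * W = Matrix.diagonal f * C := by
      rw [← Matrix.mul_assoc, ← Matrix.mul_assoc, hV, Matrix.one_mul, Matrix.mul_assoc, hC]
    have h2 : Vᵀ * (W * Matrix.diagonal f * Wᵀ) * W = C * Matrix.diagonal f := by
      rw [Matrix.mul_assoc, Matrix.mul_assoc, Matrix.mul_assoc, hW, Matrix.mul_one,
        ← Matrix.mul_assoc, hC]
    rw [← h1, ← h2, heq]
  have hzero : ∀ j k : Fin d, f j ≠ f k → C j k = 0 := by
    intro j k hjk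
    have := congrFun (congrFun hComm j) k
    rw [Matrix.diagonal_mul, Matrix.mul_diagonal] at this
    by_contra hne
    exact hjk (mul_right_cancel₀ hne (by linarith [this] <;> ring_nf)) 
  have hWVC : W = V * C := by
    rw [hC, ← Matrix.mul_assoc, hV', Matrix.one_mul]
  set e : Fin d → ℝ := fun j => if (j : ℕ) < R then (1:ℝ) else 0 with he
  have hCEC : C * Matrix.diagonal e * Cᵀ = Matrix.diagonal e := by
    ext j k
    rw [Matrix.mul_apply]
    simp only [Matrix.mul_diagonal, Matrix.transpose_apply]
    by_cases hj : (j : ℕ) < R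
    · by_cases hk : (k : ℕ) < R
      · have : ∀ m : Fin d, C j m * e m * C k m = C j m * C k m := by
          intro m
          by_cases hm : (m : ℕ) < R
          · simp [he, hm]
          · have : C j m = 0 := hzero j m (ne_of_gt (hgap j m hj (le_of_not_gt hm)))
            simp [this]
        rw [Finset.sum_congr rfl fun m _ => this m]
        have : (C * Cᵀ) j k = ∑ m, C j m * C k m := by
          rw [Matrix.mul_apply]; rfl
        rw [← this, hCC]
        simp [Matrix.one_apply, Matrix.diagonal_apply, he, hj]
      · have : ∀ m : Fin d, C j m * e m * C k m = 0 := by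
          intro m
          by_cases hm : (m : ℕ) < R
          · have : C k m = 0 := hzero k m (ne_of_lt (hgap m k hm (le_of_not_gt hk)))
            simp [this]
          · simp [he, hm]
        rw [Finset.sum_congr rfl fun m _ => this m, Finset.sum_const_zero]
        have hjk : j ≠ k := fun hjk => hk (hjk ▸ hj)
        simp [Matrix.diagonal_apply, hjk]
    · have : ∀ m : Fin d, C j m * e m * C k m = 0 := by
        intro m
        by_cases hm : (m : ℕ) < R
        · have : C j m = 0 := hzero j m (ne_of_lt (hgap m j hm (le_of_not_gt hj)))
          simp [this]
        · simp [he, hm]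
      rw [Finset.sum_congr rfl fun m _ => this m, Finset.sum_const_zero]
      by_cases hjk : j = k
      · simp [Matrix.diagonal_apply, hjk, he, hj, hjk ▸ hj]
      · simp [Matrix.diagonal_apply, hjk]
  rw [firstCols_mul_transpose, firstCols_mul_transpose, hWVC, Matrix.transpose_mul]
  calc V * Matrix.diagonal e * Vᵀ = V * (C * Matrix.diagonal e * Cᵀ) * Vᵀ := by rw [hCEC]
    _ = V * C * Matrix.diagonal e * (Cᵀ * Vᵀ) := by
        simp only [Matrix.mul_assoc]



lemma gram_of_svd {α β : Type*} [Fintype α] [Fintype β] {r : ℕ}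
    {M : Matrix α β ℝ} {U : Matrix α (Fin r) ℝ} {σ : ℕ → ℝ} {V : Matrix β (Fin r) ℝ}
    (h : IsSVD M U σ V) :
    Mᵀ * M = V * Matrix.diagonal (fun i : Fin r => σ ((i : ℕ) + 1) ^ 2) * Vᵀ := by
  have hfac := h.factorization
  rw [hfac]
  simp only [Matrix.transpose_mul, Matrix.transpose_transpose, Matrix.diagonal_transpose]
  calc V * ((Matrix.diagonal fun i : Fin r => σ ((i : ℕ) + 1)) * Uᵀ) *
        (U * (Matrix.diagonal fun i : Fin r => σ ((i : ℕ) + 1)) * Vᵀ)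
      = V * ((Matrix.diagonal fun i : Fin r => σ ((i : ℕ) + 1)) * (Uᵀ * U) *
          (Matrix.diagonal fun i : Fin r => σ ((i : ℕ) + 1))) * Vᵀ := by
        simp only [Matrix.mul_assoc]
    _ = V * Matrix.diagonal (fun i : Fin r => σ ((i : ℕ) + 1) ^ 2) * Vᵀ := by
        rw [h.leftOrtho, Matrix.mul_one, Matrix.diagonal_mul_diagonal,
          show (fun i : Fin r => σ ((i : ℕ) + 1) * σ ((i : ℕ) + 1))
            = (fun i : Fin r => σ ((i : ℕ) + 1) ^ 2) from funext fun i => (sq _).symm]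

lemma gram_fromRows {T d : ℕ} (K Q : Matrix (Fin T) (Fin d) ℝ) (β : ℝ) (hβ : 0 < β)
    {U : Matrix (Fin T ⊕ Fin T) (Fin d) ℝ} {σ : ℕ → ℝ} {V : Matrix (Fin d) (Fin d) ℝ}
    (h : IsSVD (Matrix.fromRows (β • K) (β⁻¹ • Q)) U σ V) :
    V * Matrix.diagonal (fun i : Fin d => σ ((i : ℕ) + 1) ^ 2 / β ^ 2) * Vᵀ
      = Kᵀ * K + (β ^ 4)⁻¹ • (Qᵀ * Q) := by
  have hg := gram_of_svd h
  have hlhs : (Matrix.fromRows (β • K) (β⁻¹ • Q))ᵀ * Matrix.fromRows (β • K) (β⁻¹ • Q)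
      = (β ^ 2) • (Kᵀ * K) + (β ^ 2)⁻¹ • (Qᵀ * Q) := by
    rw [Matrix.transpose_fromRows, Matrix.fromCols_mul_fromRows]
    rw [Matrix.transpose_smul, Matrix.transpose_smul, Matrix.smul_mul, Matrix.smul_mul,
      Matrix.mul_smul, Matrix.mul_smul, smul_smul, smul_smul]
    congr 1
    · congr 1; ring
    · congr 1; rw [← mul_inv]; ring_nf
  have hkey : (β ^ 2) • (Kᵀ * K) + (β ^ 2)⁻¹ • (Qᵀ * Q)
      = V * Matrix.diagonal (fun i : Fin d => σ ((i : ℕ) + 1) ^ 2) * Vᵀ := by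
    rw [← hlhs, hg]
  have hβ2 : (β ^ 2 : ℝ) ≠ 0 := by positivity
  have hthis := congrArg (fun M : Matrix (Fin d) (Fin d) ℝ => (β ^ 2)⁻¹ • M) hkey
  simp only [smul_add, smul_smul, inv_mul_cancel₀ hβ2, one_smul] at hthis
  have hdg : Matrix.diagonal (fun i : Fin d => σ ((i : ℕ) + 1) ^ 2 / β ^ 2)
      = (β ^ 2)⁻¹ • Matrix.diagonal (fun i : Fin d => σ ((i : ℕ) + 1) ^ 2) := by
    ext i j
    by_cases hij : i = j <;>
      simp [Matrix.diagonal_apply, hij, div_eq_inv_mul]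
  have hsm : (β ^ 2)⁻¹ • (V * Matrix.diagonal (fun i : Fin d => σ ((i : ℕ) + 1) ^ 2) * Vᵀ)
      = V * Matrix.diagonal (fun i : Fin d => σ ((i : ℕ) + 1) ^ 2 / β ^ 2) * Vᵀ := by
    rw [hdg, Matrix.mul_smul, Matrix.smul_mul]
  rw [← hsm, ← hthis]
  congr 1
  congr 1
  rw [← mul_inv]
  ring_nf


lemma trace_conj {d : ℕ} (V : Matrix (Fin d) (Fin d) ℝ) (t : Fin d → ℝ)
    (hV : Vᵀ * V = 1) : Matrix.trace (V * Matrix.diagonal t * Vᵀ) = ∑ i, t i := by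
  rw [Matrix.trace_mul_comm, ← Matrix.mul_assoc, hV, Matrix.one_mul, Matrix.trace_diagonal]

lemma trace_gram_nonneg {m n : ℕ} (M : Matrix (Fin m) (Fin n) ℝ) :
    0 ≤ Matrix.trace (Mᵀ * M) := by
  have : Matrix.trace (Mᵀ * M) = ∑ i, ∑ j, M j i * M j i := by
    simp [Matrix.trace, Matrix.diag, Matrix.mul_apply, Matrix.transpose_apply]
  rw [this]
  exact Finset.sum_nonneg fun i _ => Finset.sum_nonneg fun j _ => mul_self_nonneg _

lemma frob_continuous {α β : Type*} [Fintype α] [Fintype β] :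
    Continuous (fun M : Matrix α β ℝ => frobNorm M) := by
  unfold frobNorm
  exact Real.continuous_sqrt.comp <| continuous_finset_sum _ fun i _ =>
    continuous_finset_sum _ fun j _ => (continuous_id.matrix_elem i j).pow 2

end Aux

open Filter in
theorem eigen_tends_to_ksvd (T d R : ℕ) (hTd : d ≤ T) (hR : R < d)
    (K Q : Matrix (Fin T) (Fin d) ℝ)
    (UK : Matrix (Fin T) (Fin d) ℝ) (σK : ℕ → ℝ) (VK : Matrix (Fin d) (Fin d) ℝ)
    (hKSVD : IsSVD K UK σK VK)
    (hgap : σK R > σK (R + 1))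
    (Vb : ℝ → Matrix (Fin d) (Fin R) ℝ)
    (hVb : ∀ β : ℝ, 0 < β →
      ∃ (U : Matrix (Fin T ⊕ Fin T) (Fin d) ℝ) (σ : ℕ → ℝ)
        (V : Matrix (Fin d) (Fin d) ℝ),
        IsSVD (Matrix.fromRows (β • K) (β⁻¹ • Q)) U σ V ∧
          Vb β = firstCols V hR.le) :
    Tendsto (fun β : ℝ => frobNorm (K * Vb β * (Vb β)ᵀ * Qᵀ - K * Qᵀ)) atTop
      (nhds (frobNorm (K * firstCols VK hR.le * (firstCols VK hR.le)ᵀ * Qᵀ -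
        K * Qᵀ))) := by
  classical
  choose! Umat σf Vmat hSVD hVbeq using hVb
  have hVK : VKᵀ * VK = 1 := hKSVD.rightOrtho
  have hKgram : Kᵀ * K = VK * Matrix.diagonal (fun i : Fin d => σK ((i : ℕ) + 1) ^ 2) * VKᵀ :=
    gram_of_svd hKSVD
  set g : Matrix (Fin d) (Fin d) ℝ → ℝ :=
    fun P => frobNorm (K * P * Qᵀ - K * Qᵀ) with hg
  set Pinf : Matrix (Fin d) (Fin d) ℝ := firstCols VK hR.le * (firstCols VK hR.le)ᵀ with hPinf
  have hgcont : Continuous g := by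
    apply frob_continuous.comp
    exact (((continuous_const.matrix_mul continuous_id).matrix_mul continuous_const).sub
      continuous_const)
  have hgoal_eq : frobNorm (K * firstCols VK hR.le * (firstCols VK hR.le)ᵀ * Qᵀ - K * Qᵀ)
      = g Pinf := by
    rw [hg, hPinf]
    congr 2
    simp only [Matrix.mul_assoc]
  rw [hgoal_eq]
  apply Filter.tendsto_of_subseq_tendsto
  intro ns hns
  obtain ⟨N, hN⟩ := Filter.eventually_atTop.mp (Filter.tendsto_atTop.mp hns 1)
  set c : ℕ → ℝ := fun n => ns (n + N) with hc
  have hc1 : ∀ n, 1 ≤ c n := fun n => hN _ (Nat.le_add_left N n)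
  have hcpos : ∀ n, 0 < c n := fun n => lt_of_lt_of_le one_pos (hc1 n)
  have hctop : Tendsto c atTop atTop := hns.comp (tendsto_add_atTop_nat N)
  set tv : ℕ → Fin d → ℝ :=
    fun n i => σf (c n) ((i : ℕ) + 1) ^ 2 / (c n) ^ 2 with htv
  set Vm : ℕ → Matrix (Fin d) (Fin d) ℝ := fun n => Vmat (c n) with hVm
  have hSVDn : ∀ n, IsSVD (Matrix.fromRows ((c n) • K) ((c n)⁻¹ • Q)) (Umat (c n))
      (σf (c n)) (Vm n) := fun n => hSVD (c n) (hcpos n)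
  have horth : ∀ n, (Vm n)ᵀ * Vm n = 1 := fun n => (hSVDn n).rightOrtho
  have heqn : ∀ n, Vm n * Matrix.diagonal (tv n) * (Vm n)ᵀ
      = Kᵀ * K + ((c n) ^ 4)⁻¹ • (Qᵀ * Q) :=
    fun n => gram_fromRows K Q (c n) (hcpos n) (hSVDn n)
  set B : ℝ := Matrix.trace (Kᵀ * K) + Matrix.trace (Qᵀ * Q) with hB
  -- bounds on tv
  have htv_nonneg : ∀ n i, 0 ≤ tv n i := by
    intro n i
    simp only [htv]
    positivity
  have htv_anti : ∀ n, ∀ i j : Fin d, i ≤ j → tv n j ≤ tv n i := by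
    intro n i j hij
    rw [htv]
    have h1 : σf (c n) ((j : ℕ) + 1) ≤ σf (c n) ((i : ℕ) + 1) :=
      (hSVDn n).antitone _ _ (Nat.le_add_left 1 i)
        (Nat.add_le_add_right (by exact_mod_cast hij) 1)
    have h2 : 0 ≤ σf (c n) ((j : ℕ) + 1) := (hSVDn n).nonneg _ (Nat.le_add_left 1 j)
    have h3 : (0 : ℝ) < c n ^ 2 := by nlinarith [hc1 n]
    have h4 : σf (c n) ((j : ℕ) + 1) ^ 2 ≤ σf (c n) ((i : ℕ) + 1) ^ 2 := by nlinarith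
    exact (div_le_div_iff_of_pos_right h3).mpr h4
  have htv_le : ∀ n i, tv n i ≤ B := by
    intro n i
    have hsum : ∑ k, tv n k = Matrix.trace (Kᵀ * K) + ((c n) ^ 4)⁻¹ * Matrix.trace (Qᵀ * Q) := by
      rw [← trace_conj (Vm n) (tv n) (horth n), heqn n, Matrix.trace_add, Matrix.trace_smul,
        smul_eq_mul]
    have h1 : tv n i ≤ ∑ k, tv n k :=
      Finset.single_le_sum (fun k _ => htv_nonneg n k) (Finset.mem_univ i)
    have h2 : ((c n) ^ 4)⁻¹ * Matrix.trace (Qᵀ * Q) ≤ Matrix.trace (Qᵀ * Q) := by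
      have hq := trace_gram_nonneg Q
      have hc2 : (1 : ℝ) ≤ (c n) ^ 2 := by nlinarith [hc1 n]
      have h14 : (1 : ℝ) ≤ (c n) ^ 4 := by nlinarith [hc2, hc1 n]
      have hinv : ((c n) ^ 4)⁻¹ ≤ 1 := inv_le_one_of_one_le₀ h14
      nlinarith
    rw [hB]
    calc tv n i ≤ ∑ k, tv n k := h1
      _ ≤ _ := by rw [hsum]; linarith
  -- compactness
  set S : Set (Matrix (Fin d) (Fin d) ℝ × (Fin d → ℝ)) :=
    {p | p.1ᵀ * p.1 = 1 ∧ (∀ i, p.2 i ∈ Set.Icc (0 : ℝ) B) ∧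
      ∀ i j : Fin d, i ≤ j → p.2 j ≤ p.2 i} with hS
  have hSeq : S = ({p : Matrix (Fin d) (Fin d) ℝ × (Fin d → ℝ) | p.1ᵀ * p.1 = 1} ∩
      ((⋂ i : Fin d, {p : Matrix (Fin d) (Fin d) ℝ × (Fin d → ℝ) | p.2 i ∈ Set.Icc (0:ℝ) B}) ∩
        ⋂ i : Fin d, ⋂ j : Fin d,
          {p : Matrix (Fin d) (Fin d) ℝ × (Fin d → ℝ) | i ≤ j → p.2 j ≤ p.2 i})) := by
    ext p
    simp only [hS, Set.mem_setOf_eq, Set.mem_inter_iff, Set.mem_iInter]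
    try tauto
  have hSclosed : IsClosed S := by
    rw [hSeq]
    refine IsClosed.inter (isClosed_eq
      ((continuous_fst.matrix_transpose).matrix_mul continuous_fst) continuous_const)
      (IsClosed.inter ?_ ?_)
    · exact isClosed_iInter fun i =>
        IsClosed.preimage ((continuous_apply i).comp continuous_snd) isClosed_Icc
    · refine isClosed_iInter fun i => isClosed_iInter fun j => ?_
      by_cases hij : i ≤ j
      · rw [show {p : Matrix (Fin d) (Fin d) ℝ × (Fin d → ℝ) | i ≤ j → p.2 j ≤ p.2 i}
          = {p : Matrix (Fin d) (Fin d) ℝ × (Fin d → ℝ) | p.2 j ≤ p.2 i} from by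
            ext p; simp [hij]]
        exact isClosed_le ((continuous_apply j).comp continuous_snd)
          ((continuous_apply i).comp continuous_snd)
      · rw [show {p : Matrix (Fin d) (Fin d) ℝ × (Fin d → ℝ) | i ≤ j → p.2 j ≤ p.2 i}
          = Set.univ from by ext p; simp [hij]]
        exact isClosed_univ
  have hbox : IsCompact (((Set.univ.pi fun _ : Fin d => Set.univ.pi fun _ : Fin d =>
        Set.Icc (-1 : ℝ) 1) ×ˢ (Set.univ.pi fun _ : Fin d => Set.Icc (0 : ℝ) B)) :
      Set (Matrix (Fin d) (Fin d) ℝ × (Fin d → ℝ))) :=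
    IsCompact.prod (isCompact_univ_pi fun _ => isCompact_univ_pi fun _ => isCompact_Icc)
      (isCompact_univ_pi fun _ => isCompact_Icc)
  have hSsub : S ⊆ ((Set.univ.pi fun _ : Fin d => Set.univ.pi fun _ : Fin d =>
        Set.Icc (-1 : ℝ) 1) ×ˢ (Set.univ.pi fun _ : Fin d => Set.Icc (0 : ℝ) B)) := by
    rintro ⟨V, t⟩ ⟨h1, h2, _⟩
    constructor
    · intro i _
      intro j _
      have hdiag : ∑ k, V k j * V k j = 1 := by
        have := congrFun (congrFun h1 j) j
        rw [Matrix.mul_apply] at this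
        simpa [Matrix.transpose_apply, Matrix.one_apply] using this
      have hsq : V i j * V i j ≤ 1 := by
        rw [← hdiag]
        exact Finset.single_le_sum (f := fun k => V k j * V k j)
          (fun k _ => mul_self_nonneg _) (Finset.mem_univ i)
      constructor <;> nlinarith
    · intro i _
      exact h2 i
  have hScompact : IsCompact S := hbox.of_isClosed_subset hSclosed hSsub
  set z : ℕ → Matrix (Fin d) (Fin d) ℝ × (Fin d → ℝ) := fun n => (Vm n, tv n) with hz
  have hzS : ∀ n, z n ∈ S := by
    intro n
    exact ⟨horth n, fun i => ⟨htv_nonneg n i, htv_le n i⟩, htv_anti n⟩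
  haveI : FirstCountableTopology (Matrix (Fin d) (Fin d) ℝ) :=
    inferInstanceAs (FirstCountableTopology (Fin d → Fin d → ℝ))
  obtain ⟨⟨W, s⟩, hWs, φ, hφ, hconv⟩ := hScompact.tendsto_subseq hzS
  have hWconv : Tendsto (fun n => Vm (φ n)) atTop (nhds W) :=
    (continuous_fst.tendsto _).comp hconv
  have hsconv : Tendsto (fun n => tv (φ n)) atTop (nhds s) :=
    (continuous_snd.tendsto _).comp hconv
  -- limit equation
  have hAlim1 : Tendsto (fun n => Vm (φ n) * Matrix.diagonal (tv (φ n)) * (Vm (φ n))ᵀ)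
      atTop (nhds (W * Matrix.diagonal s * Wᵀ)) := by
    have hcontm : Continuous (fun p : Matrix (Fin d) (Fin d) ℝ × (Fin d → ℝ) =>
        p.1 * Matrix.diagonal p.2 * p.1ᵀ) :=
      (continuous_fst.matrix_mul (continuous_snd.matrix_diagonal)).matrix_mul
        continuous_fst.matrix_transpose
    exact ((hcontm.tendsto (W, s)).comp hconv).congr fun n => rfl
  have hctop' : Tendsto (fun n => c (φ n)) atTop atTop := hctop.comp hφ.tendsto_atTop
  have h4top : Tendsto (fun n => (c (φ n)) ^ 4) atTop atTop := by
    apply tendsto_atTop_mono (fun n => ?_) hctop'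
    exact le_self_pow₀ (hc1 (φ n)) (by norm_num)
  have hrinv : Tendsto (fun n => ((c (φ n)) ^ 4)⁻¹) atTop (nhds (0 : ℝ)) :=
    tendsto_inv_atTop_zero.comp h4top
  have hAlim2 : Tendsto (fun n => Kᵀ * K + ((c (φ n)) ^ 4)⁻¹ • (Qᵀ * Q))
      atTop (nhds (Kᵀ * K)) := by
    have : Tendsto (fun n => Kᵀ * K + ((c (φ n)) ^ 4)⁻¹ • (Qᵀ * Q))
        atTop (nhds (Kᵀ * K + (0 : ℝ) • (Qᵀ * Q))) :=
      tendsto_const_nhds.add (hrinv.smul_const _)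
    simpa using this
  have huniq : W * Matrix.diagonal s * Wᵀ = Kᵀ * K := by
    refine tendsto_nhds_unique ?_ hAlim2
    exact hAlim1.congr fun n => heqn (φ n)
  have hW1 : Wᵀ * W = 1 := hWs.1
  have hs_anti : ∀ i j : Fin d, i ≤ j → s j ≤ s i := hWs.2.2
  have hσanti : ∀ i j : Fin d, i ≤ j →
      σK ((j : ℕ) + 1) ^ 2 ≤ σK ((i : ℕ) + 1) ^ 2 := by
    intro i j hij
    have h1 : σK ((j : ℕ) + 1) ≤ σK ((i : ℕ) + 1) :=
      hKSVD.antitone _ _ (Nat.le_add_left 1 i)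
        (Nat.add_le_add_right (by exact_mod_cast hij) 1)
    have h2 : 0 ≤ σK ((j : ℕ) + 1) := hKSVD.nonneg _ (Nat.le_add_left 1 j)
    nlinarith
  have heig : s = fun i : Fin d => σK ((i : ℕ) + 1) ^ 2 := by
    refine eig_unique W VK s (fun i => σK ((i : ℕ) + 1) ^ 2) hW1 hVK hs_anti hσanti ?_
    rw [huniq, hKgram]
  have hgapf : ∀ j k : Fin d, (j : ℕ) < R → R ≤ (k : ℕ) →
      σK ((k : ℕ) + 1) ^ 2 < σK ((j : ℕ) + 1) ^ 2 := by
    intro j k hj hk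
    have h1 : σK R ≤ σK ((j : ℕ) + 1) := hKSVD.antitone _ _ (Nat.le_add_left 1 j) (by omega)
    have h2 : σK ((k : ℕ) + 1) ≤ σK (R + 1) := hKSVD.antitone _ _ (by omega) (by omega)
    have h3 : 0 ≤ σK ((k : ℕ) + 1) := hKSVD.nonneg _ (Nat.le_add_left 1 k)
    nlinarith [hgap]
  have hproj : firstCols W hR.le * (firstCols W hR.le)ᵀ = Pinf := by
    rw [hPinf]
    refine proj_unique hR.le W VK (fun i => σK ((i : ℕ) + 1) ^ 2) hW1 hVK hgapf ?_
    rw [← heig, huniq, hKgram, heig]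
  -- conclude
  have hfc : Continuous (fun M : Matrix (Fin d) (Fin d) ℝ =>
      firstCols M hR.le * (firstCols M hR.le)ᵀ) := by
    unfold firstCols
    exact (continuous_id.matrix_submatrix id (Fin.castLE hR.le)).matrix_mul
      (continuous_id.matrix_submatrix id (Fin.castLE hR.le)).matrix_transpose
  have hPconv : Tendsto (fun n => firstCols (Vm (φ n)) hR.le * (firstCols (Vm (φ n)) hR.le)ᵀ)
      atTop (nhds Pinf) := by
    have := (hfc.tendsto W).comp hWconv
    rw [hproj] at this
    exact this
  refine ⟨fun n => φ n + N, ?_⟩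
  have hfin := (hgcont.tendsto Pinf).comp hPconv
  refine hfin.congr fun n => ?_
  have hvb : Vb (c (φ n)) = firstCols (Vm (φ n)) hR.le := hVbeq (c (φ n)) (hcpos (φ n))
  show g (firstCols (Vm (φ n)) hR.le * (firstCols (Vm (φ n)) hR.le)ᵀ)
      = frobNorm (K * Vb (ns (φ n + N)) * (Vb (ns (φ n + N)))ᵀ * Qᵀ - K * Qᵀ)
  have hns_eq : ns (φ n + N) = c (φ n) := rfl
  rw [hns_eq, hvb]
  simp only [hg]
  exact congrArg (fun M => frobNorm (M * Qᵀ - K * Qᵀ)) (Matrix.mul_assoc K _ _).symm
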